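/- Let R(x) = Σ_{l=0}^{N} R_l x^l be a p×p matrix polynomial such that R_N = [[0_{(p-r)×r}, I_{p-r}],[0_{r×r}, 0_{r×(p-r)}]] and R_{N-1} = [[R¹, R²],[I_r, R⁴]] (blocks of the indicated sizes, arbitrary R¹, R², R⁴). Then det R(x) is a polynomial in x of degree exactly Np − r. -/

import Mathlib

open Polynomial Finset

/-- coefficient of a product at the sum of degree bounds is the product of coefficients. -/
lemma coeff_prod_bounds {ι : Type*} (s : Finset ι) (f : ι → Polynomial ℂ) (d : ι → ℕ)
    (h : ∀ i ∈ s, (f i).natDegree ≤ d i) :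
    (∏ i ∈ s, f i).coeff (∑ i ∈ s, d i) = ∏ i ∈ s, (f i).coeff (d i) := by
  classical
  induction s using Finset.induction_on with
  | empty => simp
  | insert a s' hx ih =>
    rw [Finset.prod_insert hx, Finset.sum_insert hx, Finset.prod_insert hx]
    rw [Polynomial.coeff_mul_add_eq_of_natDegree_le (h a (Finset.mem_insert_self a s'))
      ((Polynomial.natDegree_prod_le _ _).trans
        (Finset.sum_le_sum (fun i hi => h i (Finset.mem_insert_of_mem hi))))]
    rw [ih (fun i hi => h i (Finset.mem_insert_of_mem hi))]

lemma natDegree_le_pred {q : Polynomial ℂ} {N : ℕ} (hN : 1 ≤ N)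
    (h : q.natDegree ≤ N) (h0 : q.coeff N = 0) : q.natDegree ≤ N - 1 := by
  by_cases hq : q = 0
  · simp [hq]
  · rcases lt_or_eq_of_le h with h' | h'
    · omega
    · exfalso
      have := q.coeff_natDegree
      rw [h'] at this
      rw [h0] at this
      exact hq (Polynomial.leadingCoeff_eq_zero.mp this.symm)

def sigmaFun (p r : ℕ) (hrp : r < p) : Fin p → Fin p := fun i =>
  if _h : r ≤ (i : ℕ) then ⟨(i : ℕ) - r, by omega⟩ else ⟨(i : ℕ) + (p - r), by omega⟩

def sigmaInv (p r : ℕ) (hrp : r < p) : Fin p → Fin p := fun j =>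
  if _h : (j : ℕ) < p - r then ⟨(j : ℕ) + r, by omega⟩ else ⟨(j : ℕ) - (p - r), by omega⟩

lemma sigmaFun_val (p r : ℕ) (hrp : r < p) (i : Fin p) :
    ((sigmaFun p r hrp i : Fin p) : ℕ) =
      if r ≤ (i : ℕ) then (i : ℕ) - r else (i : ℕ) + (p - r) := by
  unfold sigmaFun; split_ifs <;> rfl

lemma sigmaInv_val (p r : ℕ) (hrp : r < p) (j : Fin p) :
    ((sigmaInv p r hrp j : Fin p) : ℕ) =
      if (j : ℕ) < p - r then (j : ℕ) + r else (j : ℕ) - (p - r) := by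
  unfold sigmaInv; split_ifs <;> rfl

def sigmaPerm (p r : ℕ) (hrp : r < p) : Equiv.Perm (Fin p) where
  toFun := sigmaFun p r hrp
  invFun := sigmaInv p r hrp
  left_inv := by
    intro i
    apply Fin.ext
    rw [sigmaInv_val, sigmaFun_val]
    have := i.isLt
    split_ifs <;> omega
  right_inv := by
    intro j
    apply Fin.ext
    rw [sigmaFun_val, sigmaInv_val]
    have := j.isLt
    split_ifs <;> omega

/-- If `R(x)` is a `p×p` matrix polynomial of degree `N` with
`R_N = [[0, I_{p-r}],[0,0]]` and `R_{N-1}` having lower-left `r×r` block `I_r`,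
then `det R(x)` has degree exactly `Np − r`. -/
theorem stmt2 (p N r : ℕ) (hp : 1 ≤ p) (hN : 1 ≤ N) (hr : r ≤ p - 1)
    (R : Matrix (Fin p) (Fin p) (Polynomial ℂ))
    -- every entry has degree at most `N`
    (hdeg : ∀ i j, (R i j).degree ≤ (N : WithBot ℕ))
    -- coefficient of `x^N` is `[[0_{(p-r)×r}, I_{p-r}],[0,0]]`
    (hRN : ∀ i j : Fin p, (R i j).coeff N = if (j : ℕ) = (i : ℕ) + r then 1 else 0)
    -- coefficient of `x^{N-1}` has lower-left `r×r` block equal to `I_r`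
    (hRN1 : ∀ i j : Fin p, p - r ≤ (i : ℕ) → (j : ℕ) < r →
      (R i j).coeff (N - 1) = if (j : ℕ) + (p - r) = (i : ℕ) then 1 else 0) :
    R.det.degree = ((N * p - r : ℕ) : WithBot ℕ) := by
  classical
  have hrp : r < p := by omega
  set D : ℕ := N * p - r with hD
  -- natDegree bounds
  have hnd : ∀ i j, (R i j).natDegree ≤ N := fun i j =>
    Polynomial.natDegree_le_iff_degree_le.mpr (hdeg i j)
  have hnd' : ∀ i j : Fin p, (j : ℕ) ≠ (i : ℕ) + r → (R i j).natDegree ≤ N - 1 := by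
    intro i j hij
    refine natDegree_le_pred hN (hnd i j) ?_
    rw [hRN i j, if_neg hij]
  -- the special permutation σ₀
  set σ₀ : Equiv.Perm (Fin p) := sigmaPerm p r hrp with hσ₀def
  have hσ₀ : ∀ i : Fin p, ((σ₀ i : Fin p) : ℕ) =
      if r ≤ (i : ℕ) then (i : ℕ) - r else (i : ℕ) + (p - r) :=
    fun i => sigmaFun_val p r hrp i
  -- degree bound function for each permutation
  set d : Equiv.Perm (Fin p) → Fin p → ℕ :=
    fun σ i => if (i : ℕ) = ((σ i : Fin p) : ℕ) + r then N else N - 1 with hd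
  have hdle : ∀ σ : Equiv.Perm (Fin p), ∀ i, (R (σ i) i).natDegree ≤ d σ i := by
    intro σ i
    simp only [hd]
    split_ifs with h
    · exact hnd _ _
    · exact hnd' _ _ h
  -- helper: counting sum
  have hcount : ∑ i : Fin p, (if r ≤ (i : ℕ) then 1 else 0) = p - r := by
    rw [Fin.sum_univ_eq_sum_range (fun i => if r ≤ i then 1 else 0) p]
    rw [← Finset.sum_filter]
    have : Finset.filter (fun i => r ≤ i) (Finset.range p) = Finset.Ico r p := by
      ext x; simp [Finset.mem_range, Finset.mem_Ico]; omega
    simp [this, Nat.card_Ico]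
  -- sum of degree bounds
  have hsum_le : ∀ σ : Equiv.Perm (Fin p), ∑ i, d σ i ≤ D := by
    intro σ
    have h1 : ∀ i : Fin p, d σ i ≤ (N - 1) + (if r ≤ (i : ℕ) then 1 else 0) := by
      intro i
      simp only [hd]
      split_ifs with h h2 h2 <;> omega
    calc ∑ i, d σ i ≤ ∑ i : Fin p, ((N - 1) + (if r ≤ (i : ℕ) then 1 else 0)) :=
          Finset.sum_le_sum (fun i _ => h1 i)
      _ = p * (N - 1) + (p - r) := by
          rw [Finset.sum_add_distrib, hcount, Finset.sum_const, Finset.card_univ,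
            Fintype.card_fin, smul_eq_mul]
      _ = D := by
          obtain ⟨n, rfl⟩ : ∃ n, N = n + 1 := ⟨N - 1, by omega⟩
          simp only [hD, Nat.add_sub_cancel]
          have : (n + 1) * p = p * n + p := by ring
          omega
  -- degree of each term is at most D
  have hterm_deg : ∀ σ : Equiv.Perm (Fin p), (∏ i, R (σ i) i).natDegree ≤ D :=
    fun σ => (Polynomial.natDegree_prod_le _ _).trans
      ((Finset.sum_le_sum (fun i _ => hdle σ i)).trans (hsum_le σ))
  -- degree bound on det
  have hdet_le : R.det.degree ≤ (D : WithBot ℕ) := by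
    rw [Matrix.det_apply']
    refine (Polynomial.degree_sum_le _ _).trans ?_
    refine Finset.sup_le (fun σ _ => ?_)
    refine (Polynomial.degree_mul_le _ _).trans ?_
    have h1 : (((Equiv.Perm.sign σ : ℤ) : Polynomial ℂ)).degree ≤ 0 :=
      Polynomial.degree_intCast_le _
    have h2 : (∏ i, R (σ i) i).degree ≤ (D : WithBot ℕ) :=
      Polynomial.degree_le_natDegree.trans (by exact_mod_cast hterm_deg σ)
    calc _ ≤ 0 + (D : WithBot ℕ) := add_le_add h1 h2
      _ = (D : WithBot ℕ) := zero_add _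
  -- key: structure of permutations contributing to coefficient at D
  -- case (b): all "diagonal" positions hit
  have hcase_b : ∀ σ : Equiv.Perm (Fin p),
      (∀ i : Fin p, r ≤ (i : ℕ) → (i : ℕ) = ((σ i : Fin p) : ℕ) + r) →
      (∏ i, R (σ i) i).coeff D =
        ∏ i : Fin p, (if r ≤ (i : ℕ) then (1 : ℂ)
          else if (i : ℕ) + (p - r) = ((σ i : Fin p) : ℕ) then 1 else 0) := by
    intro σ hb
    -- for i < r, σ i ≥ p - r
    have hlow : ∀ i : Fin p, (i : ℕ) < r → p - r ≤ ((σ i : Fin p) : ℕ) := by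
      intro i hi
      by_contra hcon
      push_neg at hcon
      set j : Fin p := ⟨((σ i : Fin p) : ℕ) + r, by omega⟩ with hj
      have hjval : (j : ℕ) = ((σ i : Fin p) : ℕ) + r := by rw [hj]
      have hbj := hb j (by omega)
      have hv : ((σ j : Fin p) : ℕ) = ((σ i : Fin p) : ℕ) := by omega
      have hji : j = i := σ.injective (Fin.ext hv)
      have := congrArg Fin.val hji
      omega
    -- the sum of the degree bounds equals D
    have hdσ : ∀ i : Fin p, d σ i = if r ≤ (i : ℕ) then N else N - 1 := by
      intro i
      simp only [hd]
      by_cases h : r ≤ (i : ℕ)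
      · rw [if_pos (hb i h), if_pos h]
      · rw [if_neg, if_neg h]; omega
    have hsum_eq : ∑ i, d σ i = D := by
      have : ∑ i, d σ i = ∑ i : Fin p, ((N - 1) + (if r ≤ (i : ℕ) then 1 else 0)) := by
        refine Finset.sum_congr rfl (fun i _ => ?_)
        rw [hdσ i]; split_ifs <;> omega
      rw [this, Finset.sum_add_distrib, hcount, Finset.sum_const, Finset.card_univ,
        Fintype.card_fin, smul_eq_mul]
      obtain ⟨n, rfl⟩ : ∃ n, N = n + 1 := ⟨N - 1, by omega⟩
      simp only [hD, Nat.add_sub_cancel]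
      have : (n + 1) * p = p * n + p := by ring
      omega
    rw [← hsum_eq, coeff_prod_bounds _ _ _ (fun i _ => hdle σ i)]
    refine Finset.prod_congr rfl (fun i _ => ?_)
    rw [hdσ i]
    by_cases h : r ≤ (i : ℕ)
    · rw [if_pos h, if_pos h, hRN, if_pos (hb i h)]
    · rw [if_neg h, if_neg h]
      push_neg at h
      rw [hRN1 (σ i) i (hlow i h) h]
  -- coefficient of terms with σ not satisfying (b) vanishes
  have hcase_a : ∀ σ : Equiv.Perm (Fin p),
      (∃ i : Fin p, r ≤ (i : ℕ) ∧ (i : ℕ) ≠ ((σ i : Fin p) : ℕ) + r) →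
      (∏ i, R (σ i) i).coeff D = 0 := by
    intro σ ⟨i₀, hi₀r, hi₀⟩
    refine Polynomial.coeff_eq_zero_of_natDegree_lt ?_
    refine lt_of_le_of_lt ((Polynomial.natDegree_prod_le _ _).trans
      (Finset.sum_le_sum (fun i _ => hdle σ i))) ?_
    -- strict bound on the sum
    have h1 : ∀ i : Fin p, d σ i ≤ (N - 1) + (if r ≤ (i : ℕ) then 1 else 0) := by
      intro i
      simp only [hd]; split_ifs with h h2 h2 <;> omega
    have h2 : d σ i₀ + 1 ≤ (N - 1) + (if r ≤ (i₀ : ℕ) then 1 else 0) := by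
      simp only [hd]
      split_ifs <;> omega
    have key : ∑ i, d σ i + 1 ≤ ∑ i : Fin p, ((N - 1) + (if r ≤ (i : ℕ) then 1 else 0)) := by
      rw [← Finset.add_sum_erase _ _ (Finset.mem_univ i₀),
        ← Finset.add_sum_erase _ (fun i : Fin p => (N - 1) + (if r ≤ (i : ℕ) then 1 else 0))
          (Finset.mem_univ i₀)]
      have := Finset.sum_le_sum (fun i (_ : i ∈ Finset.univ.erase i₀) => h1 i)
      omega
    have hDeq : ∑ i : Fin p, ((N - 1) + (if r ≤ (i : ℕ) then 1 else 0)) = D := by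
      rw [Finset.sum_add_distrib, hcount, Finset.sum_const, Finset.card_univ,
        Fintype.card_fin, smul_eq_mul]
      obtain ⟨n, rfl⟩ : ∃ n, N = n + 1 := ⟨N - 1, by omega⟩
      simp only [hD, Nat.add_sub_cancel]
      have : (n + 1) * p = p * n + p := by ring
      omega
    omega
  -- σ₀ satisfies (b) and its coefficient is 1
  have hσ₀b : ∀ i : Fin p, r ≤ (i : ℕ) → (i : ℕ) = ((σ₀ i : Fin p) : ℕ) + r := by
    intro i hi
    rw [hσ₀ i, if_pos hi]
    omega
  have hσ₀coeff : (∏ i, R (σ₀ i) i).coeff D = 1 := by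
    rw [hcase_b σ₀ hσ₀b]
    refine Finset.prod_eq_one (fun i _ => ?_)
    by_cases h : r ≤ (i : ℕ)
    · rw [if_pos h]
    · rw [if_neg h, if_pos]
      rw [hσ₀ i, if_neg h]
  -- any other σ satisfying (b) gives coefficient 0
  have hother : ∀ σ : Equiv.Perm (Fin p), σ ≠ σ₀ →
      (∏ i, R (σ i) i).coeff D = 0 := by
    intro σ hσ
    by_cases hb : ∀ i : Fin p, r ≤ (i : ℕ) → (i : ℕ) = ((σ i : Fin p) : ℕ) + r
    · -- must differ from σ₀ at some i < r
      have : ∃ i : Fin p, σ i ≠ σ₀ i := by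
        by_contra hcon
        push_neg at hcon
        exact hσ (Equiv.ext hcon)
      obtain ⟨i₀, hi₀⟩ := this
      have hi₀r : (i₀ : ℕ) < r := by
        by_contra hcon
        push_neg at hcon
        apply hi₀
        apply Fin.ext
        have e1 := hb i₀ hcon
        have e2 := hσ₀ i₀
        rw [if_pos hcon] at e2
        omega
      rw [hcase_b σ hb]
      refine Finset.prod_eq_zero (Finset.mem_univ i₀) ?_
      rw [if_neg (by omega), if_neg]
      intro hcon
      apply hi₀
      apply Fin.ext
      rw [hσ₀ i₀, if_neg (by omega)]
      omega
    · push_neg at hb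
      obtain ⟨i₀, h1, h2⟩ := hb
      exact hcase_a σ ⟨i₀, h1, h2⟩
  -- the coefficient of det at D is nonzero
  have hcoeff : R.det.coeff D ≠ 0 := by
    rw [Matrix.det_apply', Polynomial.finset_sum_coeff]
    have : ∑ σ : Equiv.Perm (Fin p),
        (((Equiv.Perm.sign σ : ℤ) : Polynomial ℂ) * ∏ i, R (σ i) i).coeff D
        = ((Equiv.Perm.sign σ₀ : ℤ) : ℂ) * 1 := by
      rw [Finset.sum_eq_single σ₀]
      · rw [Polynomial.coeff_intCast_mul, hσ₀coeff]
      · intro σ _ hσ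
        rw [Polynomial.coeff_intCast_mul, hother σ hσ, mul_zero]
      · intro h; exact absurd (Finset.mem_univ σ₀) h
    rw [this, mul_one]
    exact_mod_cast Int.cast_ne_zero.mpr (Units.ne_zero _)
  exact le_antisymm hdet_le (Polynomial.le_degree_of_ne_zero hcoeff)
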